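/- For all complex z and w, the function f(z,w) := (1/√2) ∫_{−∞}^{0} [e^{−2(z−u)²} erfc(√2(w−u)) − e^{−2(w−u)²} erfc(√2(z−u))] du satisfies ∂_z f(z,w) = e^{−(z−w)²} erfc(z+w) − (1/√2) e^{−2z²} erfc(√2 w). -/

import Mathlib

/-- The complementary error function extended to complex arguments:
`erfc(z) = 1 - (2/√π) ∫₀^z e^{-t²} dt` along the segment from `0` to `z`. -/
noncomputable def cerfc (z : ℂ) : ℂ :=
  1 - (2 / (Real.sqrt Real.pi : ℂ)) * ∫ t in (0:ℝ)..1, z * Complex.exp (-((t : ℂ) * z) ^ 2)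

/-- `f(z,w) = (1/√2) ∫_{-∞}^0 [e^{-2(z-u)²} erfc(√2(w-u)) - e^{-2(w-u)²} erfc(√2(z-u))] du`. -/
noncomputable def fEdge (z w : ℂ) : ℂ :=
  (1 / (Real.sqrt 2 : ℂ)) * ∫ u in Set.Iio (0:ℝ),
    (Complex.exp (-2 * (z - (u : ℂ)) ^ 2) * cerfc ((Real.sqrt 2 : ℂ) * (w - (u : ℂ)))
      - Complex.exp (-2 * (w - (u : ℂ)) ^ 2) * cerfc ((Real.sqrt 2 : ℂ) * (z - (u : ℂ))))

open MeasureTheory Real Set Filter Complex intervalIntegral Topology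

lemma norm_cexp (s : ℂ) : ‖Complex.exp s‖ = Real.exp s.re := Complex.norm_exp s

lemma sqrt_pi_pos : (0:ℝ) < Real.sqrt Real.pi := Real.sqrt_pos.2 Real.pi_pos

lemma one_le_sqrt_pi : (1:ℝ) ≤ Real.sqrt Real.pi := by
  rw [show (1:ℝ) = Real.sqrt 1 by simp]
  exact Real.sqrt_le_sqrt (by linarith [Real.pi_gt_three])

/-- derivative of the inner integral of `cerfc` -/
lemma hasDerivAt_cerfc_integral (z : ℂ) :
    HasDerivAt (fun x : ℂ => ∫ t in (0:ℝ)..1, x * Complex.exp (-((t : ℂ) * x) ^ 2))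
      (Complex.exp (-z ^ 2)) z := by
  set F : ℂ → ℝ → ℂ := fun x t => x * Complex.exp (-((t : ℂ) * x) ^ 2) with hF
  set F' : ℂ → ℝ → ℂ := fun x t =>
      Complex.exp (-((t : ℂ) * x) ^ 2)
        + x * (Complex.exp (-((t : ℂ) * x) ^ 2) * (-(2 * ((t:ℂ) * x) * (t:ℂ)))) with hF'
  have hdiff : ∀ (t : ℝ) (x : ℂ), HasDerivAt (fun y => F y t) (F' x t) x := by
    intro t x
    have h1 : HasDerivAt (fun y : ℂ => -((t:ℂ) * y) ^ 2) (-(2 * ((t:ℂ) * x) * (t:ℂ))) x := by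
      have := (((hasDerivAt_id x).const_mul (t:ℂ)).fun_pow 2).fun_neg
      simpa [mul_comm, mul_assoc, mul_left_comm] using this
    have h2 := h1.cexp
    simpa [F, F', mul_comm, mul_assoc, mul_left_comm] using (hasDerivAt_id x).fun_mul h2
  have cont : ∀ x : ℂ, Continuous (fun t : ℝ => F x t) := by
    intro x; fun_prop
  have contF' : ∀ x : ℂ, Continuous (fun t : ℝ => F' x t) := by
    intro x; fun_prop
  have key := intervalIntegral.hasDerivAt_integral_of_dominated_loc_of_deriv_le
    (F := F) (F' := F') (x₀ := z) (a := (0:ℝ)) (b := 1) (μ := volume)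
    (bound := fun _ => (1 + 2 * (‖z‖+1)^2 + 2 * (‖z‖+1)^2) * Real.exp ((‖z‖+1)^2))
    (Metric.ball_mem_nhds z one_pos)
    (Eventually.of_forall fun x => (cont x).aestronglyMeasurable)
    ((cont z).intervalIntegrable _ _)
    ((contF' z).aestronglyMeasurable)
    ?_ (intervalIntegrable_const) ?_
  · -- value of the derivative: ∫ t in 0..1, F' z t = exp (-z^2)
    have h2 := key.2
    have : (∫ t in (0:ℝ)..1, F' z t) = Complex.exp (-z^2) := by
      have hψ : ∀ t ∈ uIcc (0:ℝ) 1,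
          HasDerivAt (fun s : ℝ => (s:ℂ) * Complex.exp (-((s:ℂ) * z) ^ 2)) (F' z t) t := by
        intro t _
        have h1 : HasDerivAt (fun y : ℂ => -(y * z) ^ 2) (-(2 * ((t:ℂ) * z) * z)) (t:ℂ) := by
          have := (((hasDerivAt_id ((t:ℂ))).mul_const z).fun_pow 2).fun_neg
          simpa [mul_comm, mul_assoc, mul_left_comm] using this
        have h2 := ((hasDerivAt_id ((t:ℂ))).mul (h1.cexp)).comp_ofReal
        refine h2.congr_deriv ?_
        simp only [F', id_eq]
        ring
      have hcont : IntervalIntegrable (F' z) volume 0 1 := (contF' z).intervalIntegrable _ _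
      rw [intervalIntegral.integral_eq_sub_of_hasDerivAt hψ hcont]
      norm_num
    rwa [this] at h2
  · -- bound
    refine Eventually.of_forall fun t ht x hx => ?_
    have ht' : t ∈ Set.Ioc (0:ℝ) 1 := by
      simpa [Set.uIoc_of_le (zero_le_one)] using ht
    have hxn : ‖x‖ ≤ ‖z‖ + 1 := by
      have h1 : ‖x - z‖ < 1 := mem_ball_iff_norm.1 hx
      have h2 : ‖x‖ - ‖z‖ ≤ ‖x - z‖ := norm_sub_norm_le x z
      linarith
    have ht0 : 0 ≤ t := le_of_lt ht'.1
    have ht1 : t ≤ 1 := ht'.2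
    have habs : |t| ≤ 1 := by rw [_root_.abs_of_nonneg ht0]; exact ht1
    have hre : |(-((t:ℂ) * x) ^ 2).re| ≤ (‖z‖+1)^2 := by
      calc |(-((t:ℂ) * x) ^ 2).re| ≤ ‖(-((t:ℂ) * x) ^ 2)‖ := Complex.abs_re_le_norm _
        _ = ‖(t:ℂ) * x‖^2 := by rw [norm_neg, norm_pow]
        _ ≤ (‖z‖+1)^2 := by
            have htx : ‖(t:ℂ) * x‖ ≤ ‖z‖ + 1 := by
              rw [norm_mul, Complex.norm_real, Real.norm_eq_abs]
              have := norm_nonneg x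
              nlinarith
            have h0 : (0:ℝ) ≤ ‖(t:ℂ)*x‖ := norm_nonneg _
            nlinarith
    have hexp : ‖Complex.exp (-((t:ℂ) * x) ^ 2)‖ ≤ Real.exp ((‖z‖+1)^2) := by
      rw [norm_cexp]
      exact Real.exp_le_exp.2 (le_trans (le_abs_self _) hre)
    have hc : ‖(-(2 * ((t:ℂ) * x) * (t:ℂ)))‖ ≤ 2 * (‖z‖ + 1) := by
      have h1 : ‖(-(2 * ((t:ℂ) * x) * (t:ℂ)))‖ = 2 * (|t| * ‖x‖) * |t| := by
        simp [norm_mul, Complex.norm_real, Real.norm_eq_abs]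
      rw [h1]
      have haux : |t| * ‖x‖ ≤ ‖z‖ + 1 := by
        have := mul_le_mul habs hxn (norm_nonneg x) zero_le_one
        linarith
      have := mul_le_mul haux habs (abs_nonneg t) (by positivity : (0:ℝ) ≤ ‖z‖+1)
      linarith
    calc ‖F' x t‖ ≤ ‖Complex.exp (-((t:ℂ) * x) ^ 2)‖
          + ‖x * (Complex.exp (-((t : ℂ) * x) ^ 2) * (-(2 * ((t:ℂ) * x) * (t:ℂ))))‖ :=
        norm_add_le _ _
      _ ≤ Real.exp ((‖z‖+1)^2) + (‖z‖+1) * (Real.exp ((‖z‖+1)^2) * (2 * (‖z‖+1))) := by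
          refine add_le_add hexp ?_
          rw [norm_mul, norm_mul]
          gcongr
      _ ≤ (1 + 2 * (‖z‖+1)^2 + 2 * (‖z‖+1)^2) * Real.exp ((‖z‖+1)^2) := by
          have h0 : (0:ℝ) ≤ ‖z‖ := norm_nonneg _
          have he : (0:ℝ) < Real.exp ((‖z‖+1)^2) := Real.exp_pos _
          nlinarith
  · exact Eventually.of_forall fun t _ x _ => hdiff t x

lemma hasDerivAt_cerfc (z : ℂ) :
    HasDerivAt cerfc (-(2 / (Real.sqrt Real.pi : ℂ)) * Complex.exp (-z ^ 2)) z := by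
  have h := (hasDerivAt_cerfc_integral z).const_mul ((2 : ℂ) / (Real.sqrt Real.pi : ℂ))
  have h2 := (hasDerivAt_const z (1:ℂ)).sub h
  have heq : -(2 / (Real.sqrt Real.pi : ℂ)) * Complex.exp (-z ^ 2)
      = 0 - (2 / (Real.sqrt Real.pi : ℂ)) * Complex.exp (-z ^ 2) := by ring
  rw [heq]
  exact h2

lemma differentiable_cerfc : Differentiable ℂ cerfc :=
  fun z => (hasDerivAt_cerfc z).differentiableAt

lemma continuous_cerfc : Continuous cerfc := differentiable_cerfc.continuous

lemma re_sq_ofReal_mul (t : ℝ) (ζ : ℂ) : ((((t:ℂ))*ζ)^2).re = t^2*(ζ.re^2 - ζ.im^2) := by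
  simp [pow_two, Complex.mul_re, Complex.mul_im]
  ring

lemma norm_cerfc_le (ζ : ℂ) : ‖cerfc ζ‖ ≤ 1 + 2 * ‖ζ‖ * Real.exp (ζ.im^2) := by
  have hbd : ∀ t ∈ Set.uIoc (0:ℝ) 1,
      ‖ζ * Complex.exp (-((t:ℂ)*ζ)^2)‖ ≤ ‖ζ‖ * Real.exp (ζ.im^2) := by
    intro t ht
    rw [Set.uIoc_of_le zero_le_one] at ht
    rw [norm_mul, norm_cexp]
    have hre : (-((t:ℂ)*ζ)^2).re ≤ ζ.im^2 := by
      rw [Complex.neg_re, re_sq_ofReal_mul]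
      have ht1 : t^2 ≤ 1 := by nlinarith [ht.1.le, ht.2]
      nlinarith [sq_nonneg ζ.re, sq_nonneg ζ.im, sq_nonneg t]
    gcongr
  have hInt := intervalIntegral.norm_integral_le_of_norm_le_const
    (C := ‖ζ‖ * Real.exp (ζ.im^2)) (a := (0:ℝ)) (b := 1)
    (f := fun t : ℝ => ζ * Complex.exp (-((t:ℂ)*ζ)^2)) hbd
  have hnorm2 : ‖(2 / (Real.sqrt Real.pi : ℂ))‖ ≤ 2 := by
    rw [norm_div, Complex.norm_real, Real.norm_eq_abs,
      _root_.abs_of_nonneg (Real.sqrt_nonneg _)]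
    have h2 : ‖(2:ℂ)‖ = 2 := by norm_num
    rw [h2, div_le_iff₀ sqrt_pi_pos]
    nlinarith [one_le_sqrt_pi]
  calc ‖cerfc ζ‖ ≤ ‖(1:ℂ)‖ + ‖(2 / (Real.sqrt Real.pi : ℂ))
        * ∫ t in (0:ℝ)..1, ζ * Complex.exp (-((t : ℂ) * ζ) ^ 2)‖ := norm_sub_le _ _
    _ ≤ 1 + 2 * (‖ζ‖ * Real.exp (ζ.im^2) * |(1:ℝ) - 0|) := by
        rw [norm_one, norm_mul]
        have hpos : (0:ℝ) ≤ ‖ζ‖ * Real.exp (ζ.im^2) * |(1:ℝ) - 0| := by positivity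
        exact add_le_add le_rfl (mul_le_mul hnorm2 hInt (norm_nonneg _) (by norm_num))
    _ = 1 + 2 * ‖ζ‖ * Real.exp (ζ.im^2) := by
        rw [show |(1:ℝ) - 0| = 1 by norm_num]
        ring
  
lemma integrable_poly_gauss : Integrable (fun u : ℝ => (1+|u|)^2 * Real.exp (-u^2)) := by
  have h1 : Integrable (fun u : ℝ =>
      2*Real.exp (-(1:ℝ)*u^2) + 2*(u^2*Real.exp (-(1:ℝ)*u^2))) := by
    have ha := (integrable_exp_neg_mul_sq (b := 1) one_pos).const_mul 2
    have hb0 := integrable_rpow_mul_exp_neg_mul_sq (b := 1) one_pos (s := 2) (by norm_num)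
    have hb1 : Integrable (fun u : ℝ => u^2 * Real.exp (-(1:ℝ)*u^2)) := by
      refine hb0.congr (Eventually.of_forall fun x => ?_)
      norm_num [Real.rpow_natCast]
    exact ha.add (hb1.const_mul 2)
  have h1' : Integrable (fun u : ℝ => 2*Real.exp (-u^2) + 2*(u^2*Real.exp (-u^2))) := by
    simpa [neg_one_mul] using h1
  refine h1'.mono' ?_ ?_
  · apply Continuous.aestronglyMeasurable
    fun_prop
  · refine Eventually.of_forall fun u => ?_
    rw [Real.norm_eq_abs, _root_.abs_of_nonneg (by positivity)]
    have h2 : |u|^2 = u^2 := sq_abs u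
    have := Real.exp_pos (-u^2)
    nlinarith [sq_nonneg (|u| - 1), abs_nonneg u]

lemma tendsto_poly_gauss_atBot :
    Tendsto (fun u : ℝ => (1+|u|)^2 * Real.exp (-u^2)) atBot (𝓝 0) := by
  have h1 : Tendsto (fun t : ℝ => t^2 * Real.exp (-t)) atTop (𝓝 0) :=
    tendsto_pow_mul_exp_neg_atTop_nhds_zero 2
  have h2 : Tendsto (fun u : ℝ => u^2) atBot atTop := by
    have := (tendsto_pow_atTop (α := ℝ) (n := 2) (by norm_num)).comp tendsto_neg_atBot_atTop
    refine this.congr fun u => by simp [Function.comp]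
  have h3 := h1.comp h2
  refine squeeze_zero' ?_ ?_ h3
  · exact Eventually.of_forall fun u => by positivity
  · filter_upwards [eventually_le_atBot (-2 : ℝ)] with u hu
    have habs : (2:ℝ) ≤ |u| := by
      rw [abs_of_nonpos (by linarith)]; linarith
    have h4 : 1 + |u| ≤ u^2 := by
      have : |u|^2 = u^2 := sq_abs u
      nlinarith
    have h5 : (1+|u|)^2 ≤ (u^2)^2 := by nlinarith [abs_nonneg u]
    simp only [Function.comp]
    have := Real.exp_pos (-u^2)
    calc (1+|u|)^2 * Real.exp (-u^2) ≤ (u^2)^2 * Real.exp (-u^2) := by nlinarith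
      _ = (u^2)^2 * Real.exp (-(u^2)) := rfl

lemma integrable_of_poly_gauss_bound {f : ℝ → ℂ} (hf : Continuous f) (K : ℝ)
    (h : ∀ u : ℝ, ‖f u‖ ≤ K * ((1+|u|)^2 * Real.exp (-u^2))) : Integrable f :=
  (integrable_poly_gauss.const_mul K).mono' hf.aestronglyMeasurable (Eventually.of_forall h)

lemma re_neg_sq_shift (c : ℂ) (u : ℝ) : (-(c - 2*(u:ℂ))^2).re = -(c.re - 2*u)^2 + c.im^2 := by
  simp [pow_two, Complex.mul_re, Complex.mul_im, Complex.sub_re, Complex.sub_im]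
  ring

lemma norm_cexp_neg_sq_shift (c : ℂ) (u : ℝ) :
    ‖Complex.exp (-(c - 2*(u:ℂ))^2)‖ = Real.exp (-(c.re - 2*u)^2 + c.im^2) := by
  rw [norm_cexp, re_neg_sq_shift]

lemma norm_cexp_neg_sq_shift_le' (c : ℂ) (u : ℝ) (R : ℝ) (hR : ‖c‖ ≤ R) :
    ‖Complex.exp (-(c - 2*(u:ℂ))^2)‖ ≤ Real.exp (2*R^2) * Real.exp (-u^2) := by
  rw [norm_cexp_neg_sq_shift]
  have h1 : |c.re| ≤ R := le_trans (Complex.abs_re_le_norm c) hR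
  have h2 : |c.im| ≤ R := le_trans (Complex.abs_im_le_norm c) hR
  have h3 : -(c.re - 2*u)^2 + c.im^2 ≤ 2*R^2 + (-u^2) := by
    nlinarith [_root_.sq_abs c.re, _root_.sq_abs c.im, abs_nonneg c.re, abs_nonneg c.im,
      sq_nonneg (c.re - u), sq_nonneg (c.re + 2*u), sq_nonneg ((c.re - 2*u) + 2*u)]
  rw [← Real.exp_add]
  exact Real.exp_le_exp.2 h3

lemma poly_ge_one (u : ℝ) : (1:ℝ) ≤ (1+|u|)^2 := by nlinarith [abs_nonneg u]

lemma norm_cexp_neg_sq_shift_le (c : ℂ) (u : ℝ) (R : ℝ) (hR : ‖c‖ ≤ R) :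
    ‖Complex.exp (-(c - 2*(u:ℂ))^2)‖ ≤ Real.exp (2*R^2) * ((1+|u|)^2 * Real.exp (-u^2)) := by
  refine le_trans (norm_cexp_neg_sq_shift_le' c u R hR) ?_
  have h4 := poly_ge_one u
  nlinarith [Real.exp_pos (-u^2), Real.exp_pos (2*R^2),
    mul_le_mul_of_nonneg_left (mul_le_mul_of_nonneg_right h4 (Real.exp_pos (-u^2)).le)
      (Real.exp_pos (2*R^2)).le]

lemma hasDerivAt_phi (c : ℂ) :
    HasDerivAt (fun x : ℂ => ∫ u in Set.Iio (0:ℝ), Complex.exp (-(x - 2*(u:ℂ))^2))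
      (-(1/2 : ℂ) * Complex.exp (-c^2)) c := by
  set μ : MeasureTheory.Measure ℝ := volume.restrict (Set.Iio (0:ℝ)) with hμ
  set F : ℂ → ℝ → ℂ := fun x u => Complex.exp (-(x - 2*(u:ℂ))^2) with hF
  set F' : ℂ → ℝ → ℂ := fun x u => Complex.exp (-(x - 2*(u:ℂ))^2) * (-(2*(x - 2*(u:ℂ)))) with hF'
  set E : ℝ := Real.exp (2*(‖c‖+1)^2) with hE
  set K : ℝ := 4*(‖c‖+1) * E with hK
  have hdiff : ∀ (u : ℝ) (x : ℂ), HasDerivAt (fun y => F y u) (F' x u) x := by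
    intro u x
    have h1 : HasDerivAt (fun y : ℂ => -(y - 2*(u:ℂ))^2) (-(2*(x - 2*(u:ℂ)))) x := by
      have := (((hasDerivAt_id x).sub_const (2*(u:ℂ))).fun_pow 2).fun_neg
      simpa [mul_comm, mul_assoc] using this
    exact h1.cexp
  have contF : ∀ x : ℂ, Continuous (fun u : ℝ => F x u) := by intro x; fun_prop
  have contF' : ∀ x : ℂ, Continuous (fun u : ℝ => F' x u) := by intro x; fun_prop
  have hboundF' : ∀ (u : ℝ) (x : ℂ), ‖x‖ ≤ ‖c‖+1 → ‖F' x u‖ ≤ K * ((1+|u|)^2 * Real.exp (-u^2)) := by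
    intro u x hxc
    simp only [F', norm_mul]
    have hb1 := norm_cexp_neg_sq_shift_le' x u (‖c‖+1) hxc
    have hb2 : ‖-(2*(x - 2*(u:ℂ)))‖ ≤ 4*(‖c‖+1)*(1+|u|)^2 := by
      rw [norm_neg, norm_mul]
      have h3 : ‖x - 2*(u:ℂ)‖ ≤ ‖c‖+1 + 2*|u| := by
        calc ‖x - 2*(u:ℂ)‖ ≤ ‖x‖ + ‖2*(u:ℂ)‖ := norm_sub_le _ _
          _ ≤ ‖c‖+1 + 2*|u| := by
              rw [norm_mul, Complex.norm_real, Real.norm_eq_abs]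
              have h4 : ‖(2:ℂ)‖ = 2 := by norm_num
              rw [h4]; linarith
      have h4 : ‖(2:ℂ)‖ = 2 := by norm_num
      rw [h4]
      have h5 : (0:ℝ) ≤ ‖c‖ := norm_nonneg c
      nlinarith [abs_nonneg u, sq_nonneg u, mul_nonneg h5 (abs_nonneg u), _root_.sq_abs u]
    calc ‖Complex.exp (-(x - 2*(u:ℂ))^2)‖ * ‖-(2*(x - 2*(u:ℂ)))‖
        ≤ (Real.exp (2*(‖c‖+1)^2) * Real.exp (-u^2)) * (4*(‖c‖+1)*(1+|u|)^2) :=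
          mul_le_mul hb1 hb2 (norm_nonneg _) (by positivity)
      _ = K * ((1+|u|)^2 * Real.exp (-u^2)) := by rw [hK, hE]; ring
  have key := hasDerivAt_integral_of_dominated_loc_of_deriv_le
    (F := F) (F' := F') (x₀ := c) (μ := μ)
    (bound := fun u => K * ((1+|u|)^2 * Real.exp (-u^2)))
    (Metric.ball_mem_nhds c one_pos)
    (Eventually.of_forall fun x => (contF x).aestronglyMeasurable)
    ((integrable_of_poly_gauss_bound (contF c) E
      (fun u => norm_cexp_neg_sq_shift_le c u (‖c‖+1) (by linarith))).restrict)
    ((contF' c).aestronglyMeasurable)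
    ?_
    ((integrable_poly_gauss.const_mul K).restrict)
    (Eventually.of_forall fun u x _ => hdiff u x)
  · have hval : (∫ u, F' c u ∂μ) = -(1/2 : ℂ) * Complex.exp (-c^2) := by
      have hIic : (∫ u in Set.Iic (0:ℝ), F' c u) = -(1/2 : ℂ) * Complex.exp (-c^2) := by
        set φ : ℝ → ℂ := fun u => (-(1/2 : ℂ)) * Complex.exp (-(c - 2*(u:ℂ))^2) with hφ
        have hder : ∀ u : ℝ, HasDerivAt φ (F' c u) u := by
          intro u
          have h0 : HasDerivAt (fun y : ℂ => c - 2*y) (-2) (u:ℂ) := by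
            simpa using ((hasDerivAt_id (u:ℂ)).const_mul (2:ℂ)).const_sub c
          have h1 := ((h0.fun_pow 2).fun_neg.cexp.const_mul (-(1/2 : ℂ))).comp_ofReal
          refine h1.congr_deriv ?_
          simp only [F']
          push_cast
          ring
        have hint : MeasureTheory.IntegrableOn (F' c) (Set.Iic (0:ℝ)) :=
          (integrable_of_poly_gauss_bound (contF' c) K
            (fun u => hboundF' u c (by linarith))).integrableOn
        have htend : Filter.Tendsto φ atBot (𝓝 (0:ℂ)) := by
          have hb : ∀ u : ℝ, ‖φ u‖ ≤ E * ((1+|u|)^2 * Real.exp (-u^2)) := by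
            intro u
            simp only [φ, norm_mul]
            have hb1 := norm_cexp_neg_sq_shift_le c u (‖c‖+1) (by linarith)
            have h5 : ‖(-(1/2 : ℂ))‖ = 1/2 := by norm_num
            rw [h5, hE]
            nlinarith [norm_nonneg (Complex.exp (-(c - 2*(u:ℂ))^2)),
              mul_pos (Real.exp_pos (2*(‖c‖+1)^2))
                (mul_pos (by positivity : (0:ℝ) < (1+|u|)^2) (Real.exp_pos (-u^2)))]
          exact squeeze_zero_norm hb (by simpa using tendsto_poly_gauss_atBot.const_mul E)
        have hres := MeasureTheory.integral_Iic_of_hasDerivAt_of_tendsto'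
          (f := φ) (f' := F' c) (a := (0:ℝ)) (m := 0)
          (fun x _ => hder x) hint htend
        rw [hres]
        simp only [φ]
        norm_num
      rw [hμ, ← hIic]
      exact MeasureTheory.setIntegral_congr_set Iio_ae_eq_Iic
    rw [← hval]
    exact key.2
  · refine Eventually.of_forall fun u x hx => ?_
    have hxc : ‖x‖ ≤ ‖c‖ + 1 := by
      have h1 : ‖x - c‖ < 1 := mem_ball_iff_norm.1 hx
      have h2 : ‖x‖ - ‖c‖ ≤ ‖x - c‖ := norm_sub_norm_le x c
      linarith
    exact hboundF' u x hxc

lemma cerfc_zero : cerfc 0 = 1 := by simp [cerfc]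

lemma sqrt_four : Real.sqrt 4 = 2 := by
  rw [show (4:ℝ) = 2^2 by norm_num, Real.sqrt_sq (by norm_num : (0:ℝ) ≤ 2)]

lemma integral_halfline_gaussian (c : ℂ) :
    (∫ u in Set.Iio (0:ℝ), Complex.exp (-(c - 2*(u:ℂ))^2))
      = ((Real.sqrt Real.pi / 4 : ℝ) : ℂ) * cerfc c := by
  set Φ : ℂ → ℂ := fun x => ∫ u in Set.Iio (0:ℝ), Complex.exp (-(x - 2*(u:ℂ))^2) with hΦ
  set D : ℂ → ℂ := fun x => Φ x - ((Real.sqrt Real.pi / 4 : ℝ) : ℂ) * cerfc x with hD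
  have hderD : ∀ x : ℂ, HasDerivAt D 0 x := by
    intro x
    have h1 := hasDerivAt_phi x
    have h2 := (hasDerivAt_cerfc x).const_mul (((Real.sqrt Real.pi / 4 : ℝ)) : ℂ)
    have h3 := h1.sub h2
    refine h3.congr_deriv ?_
    have hs : ((Real.sqrt Real.pi : ℝ) : ℂ) ≠ 0 := by
      rw [Complex.ofReal_ne_zero]
      exact ne_of_gt sqrt_pi_pos
    push_cast
    field_simp
    ring
  have hconst : D c = D 0 :=
    is_const_of_deriv_eq_zero (fun x => (hderD x).differentiableAt)
      (fun x => (hderD x).deriv) c 0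
  have hΦ0 : Φ 0 = (((Real.sqrt Real.pi / 4 : ℝ)) : ℂ) := by
    have h1 : ∀ u : ℝ, Complex.exp (-((0:ℂ) - 2*(u:ℂ))^2) = ((Real.exp (-(2*u)^2) : ℝ) : ℂ) := by
      intro u
      have harg : -((0:ℂ) - 2*(u:ℂ))^2 = ((-(2*u)^2 : ℝ) : ℂ) := by push_cast; ring
      rw [harg, Complex.ofReal_exp]
    calc Φ 0 = ∫ u in Set.Iio (0:ℝ), ((Real.exp (-(2*u)^2) : ℝ) : ℂ) := by
          simp only [hΦ, h1]
      _ = (((∫ u in Set.Iio (0:ℝ), Real.exp (-(2*u)^2)) : ℝ) : ℂ) := integral_ofReal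
      _ = (((Real.sqrt Real.pi / 4 : ℝ)) : ℂ) := by
          norm_cast
          have h2 : (∫ u in Set.Iio (0:ℝ), Real.exp (-(2*u)^2))
              = ∫ u in Set.Iic (0:ℝ), Real.exp (-(2*u)^2) :=
            MeasureTheory.setIntegral_congr_set Iio_ae_eq_Iic
          have h3 := integral_comp_neg_Ioi (0:ℝ) (fun u => Real.exp (-(2*u)^2))
          simp only [neg_zero, mul_neg, neg_sq] at h3
          have h4 : (∫ x in Set.Ioi (0:ℝ), Real.exp (-(2*x)^2))
              = ∫ x in Set.Ioi (0:ℝ), Real.exp (-4*x^2) := by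
            congr 1
            ext x
            ring_nf
          rw [h2, ← h3, h4, integral_gaussian_Ioi, Real.sqrt_div (le_of_lt Real.pi_pos), sqrt_four]
          ring
  have hD0 : D 0 = 0 := by
    rw [hD]
    simp only [hΦ0, cerfc_zero, mul_one]
    ring
  have : D c = 0 := hconst.trans hD0
  rw [hD] at this
  simp only [sub_eq_zero] at this
  exact this

lemma s2_sq : ((Real.sqrt 2 : ℝ) : ℂ)^2 = 2 := by
  rw [← Complex.ofReal_pow, Real.sq_sqrt (by norm_num : (0:ℝ) ≤ 2)]
  norm_num

lemma s2_ne : ((Real.sqrt 2 : ℝ) : ℂ) ≠ 0 := by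
  rw [Complex.ofReal_ne_zero]
  positivity

lemma sqrt2_le_two : Real.sqrt 2 ≤ 2 := by
  have h := Real.sqrt_le_sqrt (by norm_num : (2:ℝ) ≤ 4)
  rwa [sqrt_four] at h

lemma spi_ne : ((Real.sqrt Real.pi : ℝ) : ℂ) ≠ 0 := by
  rw [Complex.ofReal_ne_zero]
  exact ne_of_gt sqrt_pi_pos

lemma re_neg_two_sq (p : ℂ) (u : ℝ) : (-2*(p-(u:ℂ))^2).re = -2*(p.re-u)^2 + 2*p.im^2 := by
  simp [pow_two, Complex.mul_re, Complex.mul_im, Complex.sub_re, Complex.sub_im]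
  ring

lemma norm_sq_complex_le (p : ℂ) (R : ℝ) (hp : ‖p‖ ≤ R) : p.re^2 + p.im^2 ≤ R^2 := by
  have h0 : ‖p‖ ≤ R := hp
  have h1 : ‖p‖ ^ 2 ≤ R^2 := by nlinarith [norm_nonneg p]
  rw [Complex.sq_norm, Complex.normSq_apply] at h1
  nlinarith [h1]

lemma norm_cexp_neg_two_sq_le (p : ℂ) (u R : ℝ) (hp : ‖p‖ ≤ R) :
    ‖Complex.exp (-2*(p-(u:ℂ))^2)‖ ≤ Real.exp (2*R^2) * Real.exp (-u^2) := by
  rw [norm_cexp, re_neg_two_sq, ← Real.exp_add]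
  apply Real.exp_le_exp.2
  have hsq := norm_sq_complex_le p R hp
  nlinarith [sq_nonneg (2*p.re - u)]

lemma norm_cexp_neg_two_sq_le_const (p : ℂ) (u : ℝ) :
    ‖Complex.exp (-2*(p-(u:ℂ))^2)‖ ≤ Real.exp (2*p.im^2) := by
  rw [norm_cexp, re_neg_two_sq]
  apply Real.exp_le_exp.2
  nlinarith [sq_nonneg (p.re - u)]

lemma norm_cerfc_s2_le (q : ℂ) (u : ℝ) :
    ‖cerfc (((Real.sqrt 2:ℝ):ℂ)*(q-(u:ℂ)))‖
      ≤ (1+4*(‖q‖+1)*Real.exp (2*q.im^2)) * (1+|u|) := by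
  refine le_trans (norm_cerfc_le _) ?_
  have him : ((((Real.sqrt 2:ℝ):ℂ))*(q-(u:ℂ))).im = Real.sqrt 2 * q.im := by
    simp [Complex.mul_im, Complex.sub_im, Complex.sub_re]
  rw [him]
  have hsq : (Real.sqrt 2 * q.im)^2 = 2*q.im^2 := by
    rw [mul_pow, Real.sq_sqrt (by norm_num : (0:ℝ) ≤ 2)]
  rw [hsq]
  have hE := Real.exp_pos (2*q.im^2)
  have hB : (1:ℝ) ≤ Real.exp (2*q.im^2) := Real.one_le_exp (by positivity)
  have hnorm : ‖(((Real.sqrt 2:ℝ):ℂ))*(q-(u:ℂ))‖ ≤ 2*(‖q‖+|u|) := by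
    rw [norm_mul, Complex.norm_real, Real.norm_eq_abs, _root_.abs_of_nonneg (Real.sqrt_nonneg 2)]
    have h1 : ‖q - (u:ℂ)‖ ≤ ‖q‖ + |u| := by
      calc ‖q - (u:ℂ)‖ ≤ ‖q‖ + ‖((u:ℝ):ℂ)‖ := norm_sub_le _ _
        _ = ‖q‖ + |u| := by rw [Complex.norm_real, Real.norm_eq_abs]
    nlinarith [sqrt2_le_two, Real.sqrt_nonneg 2, norm_nonneg (q - (u:ℂ)), abs_nonneg u,
      norm_nonneg q]
  have key1 : 2*‖(((Real.sqrt 2:ℝ):ℂ))*(q-(u:ℂ))‖*Real.exp (2*q.im^2)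
      ≤ 4*(‖q‖+|u|)*Real.exp (2*q.im^2) := by
    nlinarith [mul_le_mul_of_nonneg_right hnorm hE.le]
  have key2 : 4*(‖q‖+|u|)*Real.exp (2*q.im^2)
      ≤ 4*(‖q‖+1)*Real.exp (2*q.im^2) + 4*(‖q‖+1)*Real.exp (2*q.im^2)*|u| := by
    nlinarith [mul_nonneg (mul_nonneg hE.le (abs_nonneg u)) (norm_nonneg q), abs_nonneg u]
  nlinarith [key1, key2, abs_nonneg u]

lemma norm_exp_mul_cerfc_le (p q : ℂ) (u R : ℝ) (hp : ‖p‖ ≤ R) :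
    ‖Complex.exp (-2*(p-(u:ℂ))^2) * cerfc (((Real.sqrt 2:ℝ):ℂ)*(q-(u:ℂ)))‖
      ≤ (Real.exp (2*R^2) * (1+4*(‖q‖+1)*Real.exp (2*q.im^2)))
          * ((1+|u|)^2 * Real.exp (-u^2)) := by
  rw [norm_mul]
  calc ‖Complex.exp (-2*(p-(u:ℂ))^2)‖ * ‖cerfc (((Real.sqrt 2:ℝ):ℂ)*(q-(u:ℂ)))‖
      ≤ (Real.exp (2*R^2) * Real.exp (-u^2))
          * ((1+4*(‖q‖+1)*Real.exp (2*q.im^2))*(1+|u|)) :=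
        mul_le_mul (norm_cexp_neg_two_sq_le p u R hp) (norm_cerfc_s2_le q u)
          (norm_nonneg _) (by positivity)
    _ = (Real.exp (2*R^2) * (1+4*(‖q‖+1)*Real.exp (2*q.im^2)))
          * ((1+|u|) * Real.exp (-u^2)) := by ring
    _ ≤ (Real.exp (2*R^2) * (1+4*(‖q‖+1)*Real.exp (2*q.im^2)))
          * ((1+|u|)^2 * Real.exp (-u^2)) := by
        apply mul_le_mul_of_nonneg_left _ (by positivity)
        apply mul_le_mul_of_nonneg_right _ (Real.exp_pos _).le
        nlinarith [abs_nonneg u]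

theorem stmt8 (z w : ℂ) :
    HasDerivAt (fun z => fEdge z w)
      (Complex.exp (-(z - w) ^ 2) * cerfc (z + w)
        - (1 / (Real.sqrt 2 : ℂ)) * Complex.exp (-2 * z ^ 2) * cerfc ((Real.sqrt 2 : ℂ) * w)) z := by
  set μ : MeasureTheory.Measure ℝ := volume.restrict (Set.Iio (0:ℝ)) with hμ
  set G : ℂ → ℝ → ℂ := fun x u =>
    Complex.exp (-2 * (x - (u:ℂ)) ^ 2) * cerfc ((Real.sqrt 2 : ℂ) * (w - (u:ℂ)))
      - Complex.exp (-2 * (w - (u:ℂ)) ^ 2) * cerfc ((Real.sqrt 2 : ℂ) * (x - (u:ℂ))) with hG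
  set G' : ℂ → ℝ → ℂ := fun x u =>
    -4*(x-(u:ℂ)) * Complex.exp (-2*(x-(u:ℂ))^2) * cerfc ((Real.sqrt 2 : ℂ) * (w - (u:ℂ)))
      + (2*(Real.sqrt 2 : ℂ)/(Real.sqrt Real.pi : ℂ))
          * (Complex.exp (-2*(x-(u:ℂ))^2) * Complex.exp (-2*(w-(u:ℂ))^2)) with hG'
  -- abbreviations for constants
  set Cw : ℝ := 1+4*(‖w‖+1)*Real.exp (2*w.im^2) with hCw
  set Cz : ℝ := 1+4*(‖z‖+1)*Real.exp (2*z.im^2) with hCz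
  set Bw : ℝ := Real.exp (2*w.im^2) with hBw
  set Ez : ℝ := Real.exp (2*(‖z‖+1)^2) with hEz
  set K : ℝ := (4*(‖z‖+2)*Cw + 2*Bw) * Ez with hK
  have hCwpos : 0 < Cw := by rw [hCw]; positivity
  have hBwpos : 0 < Bw := Real.exp_pos _
  have hEzpos : 0 < Ez := Real.exp_pos _
  -- pointwise derivative in x
  have hdiff : ∀ (u : ℝ) (x : ℂ), HasDerivAt (fun y => G y u) (G' x u) x := by
    intro u x
    have h0 : HasDerivAt (fun y : ℂ => -2*(y-(u:ℂ))^2) (-2*(2*(x-(u:ℂ)))) x := by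
      have := (((hasDerivAt_id x).sub_const ((u:ℂ))).pow 2).const_mul (-2:ℂ)
      simpa [mul_comm, mul_assoc] using this
    have h1 := h0.cexp
    have hinner : HasDerivAt (fun y : ℂ => (Real.sqrt 2 : ℂ)*(y-(u:ℂ))) ((Real.sqrt 2 : ℂ)) x := by
      simpa using ((hasDerivAt_id x).sub_const ((u:ℂ))).const_mul ((Real.sqrt 2 : ℂ))
    have h2 := (hasDerivAt_cerfc ((Real.sqrt 2 : ℂ)*(x-(u:ℂ)))).comp x hinner
    have h4 := (h1.mul_const (cerfc ((Real.sqrt 2 : ℂ)*(w-(u:ℂ))))).fun_sub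
      (h2.const_mul (Complex.exp (-2*(w-(u:ℂ))^2)))
    refine h4.congr_deriv ?_
    have hexp : Complex.exp (-((Real.sqrt 2 : ℂ)*(x-(u:ℂ)))^2) = Complex.exp (-2*(x-(u:ℂ))^2) := by
      rw [mul_pow, s2_sq]
      congr 1
      ring
    rw [hG']
    simp only [Function.comp]
    rw [hexp]
    ring
  -- continuity in u
  have hcontG : ∀ x : ℂ, Continuous (G x) := by
    intro x
    apply Continuous.sub <;> apply Continuous.mul
    · fun_prop
    · exact continuous_cerfc.comp (by fun_prop)
    · fun_prop
    · exact continuous_cerfc.comp (by fun_prop)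
  have hcontG' : ∀ x : ℂ, Continuous (G' x) := by
    intro x
    apply Continuous.add
    · apply Continuous.mul
      · fun_prop
      · exact continuous_cerfc.comp (by fun_prop)
    · fun_prop
  -- uniform bound for G' on ball z 1
  have hboundG' : ∀ (u : ℝ) (x : ℂ), ‖x‖ ≤ ‖z‖+1 →
      ‖G' x u‖ ≤ K * ((1+|u|)^2 * Real.exp (-u^2)) := by
    intro u x hx
    have f1 : ‖-4*(x-(u:ℂ))‖ ≤ 4*(‖z‖+2)*(1+|u|) := by
      rw [norm_mul]
      have h4 : ‖(-4:ℂ)‖ = 4 := by norm_num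
      rw [h4]
      have h5 : ‖x - (u:ℂ)‖ ≤ (‖z‖+1) + |u| := by
        calc ‖x - (u:ℂ)‖ ≤ ‖x‖ + ‖((u:ℝ):ℂ)‖ := norm_sub_le _ _
          _ ≤ (‖z‖+1) + |u| := by
              rw [Complex.norm_real, Real.norm_eq_abs]
              linarith
      nlinarith [abs_nonneg u, norm_nonneg z]
    have f2 : ‖Complex.exp (-2*(x-(u:ℂ))^2)‖ ≤ Ez * Real.exp (-u^2) :=
      norm_cexp_neg_two_sq_le x u (‖z‖+1) hx
    have f3 : ‖cerfc ((Real.sqrt 2 : ℂ)*(w-(u:ℂ)))‖ ≤ Cw * (1+|u|) := norm_cerfc_s2_le w u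
    have fc : ‖(2*(Real.sqrt 2 : ℂ)/(Real.sqrt Real.pi : ℂ))‖ ≤ 2 := by
      rw [norm_div, norm_mul, Complex.norm_real, Complex.norm_real, Real.norm_eq_abs,
        Real.norm_eq_abs, _root_.abs_of_nonneg (Real.sqrt_nonneg 2),
        _root_.abs_of_nonneg (Real.sqrt_nonneg Real.pi)]
      have h6 : ‖(2:ℂ)‖ = 2 := by norm_num
      rw [h6, div_le_iff₀ sqrt_pi_pos]
      have h7 : Real.sqrt 2 ≤ Real.sqrt Real.pi :=
        Real.sqrt_le_sqrt (by linarith [Real.pi_gt_three])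
      nlinarith [Real.sqrt_nonneg 2, one_le_sqrt_pi]
    have f4 : ‖Complex.exp (-2*(w-(u:ℂ))^2)‖ ≤ Bw := norm_cexp_neg_two_sq_le_const w u
    rw [hG']
    calc ‖-4*(x-(u:ℂ)) * Complex.exp (-2*(x-(u:ℂ))^2) * cerfc ((Real.sqrt 2 : ℂ) * (w - (u:ℂ)))
        + (2*(Real.sqrt 2 : ℂ)/(Real.sqrt Real.pi : ℂ))
          * (Complex.exp (-2*(x-(u:ℂ))^2) * Complex.exp (-2*(w-(u:ℂ))^2))‖
        ≤ ‖-4*(x-(u:ℂ)) * Complex.exp (-2*(x-(u:ℂ))^2) * cerfc ((Real.sqrt 2 : ℂ) * (w - (u:ℂ)))‖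
          + ‖(2*(Real.sqrt 2 : ℂ)/(Real.sqrt Real.pi : ℂ))
          * (Complex.exp (-2*(x-(u:ℂ))^2) * Complex.exp (-2*(w-(u:ℂ))^2))‖ := norm_add_le _ _
      _ ≤ (4*(‖z‖+2)*(1+|u|)) * (Ez * Real.exp (-u^2)) * (Cw * (1+|u|))
          + 2 * ((Ez * Real.exp (-u^2)) * Bw) := by
          apply add_le_add
          · rw [norm_mul, norm_mul]
            apply mul_le_mul _ f3 (norm_nonneg _) (by positivity)
            exact mul_le_mul f1 f2 (norm_nonneg _) (by positivity)
          · rw [norm_mul, norm_mul]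
            apply mul_le_mul fc _ (by positivity) (by norm_num)
            exact mul_le_mul f2 f4 (norm_nonneg _) (by positivity)
      _ ≤ K * ((1+|u|)^2 * Real.exp (-u^2)) := by
          rw [hK]
          have hP1 : (1:ℝ) ≤ (1+|u|)^2 := poly_ge_one u
          have he := Real.exp_pos (-u^2)
          nlinarith [mul_pos hEzpos he, abs_nonneg u,
            mul_nonneg (mul_nonneg hEzpos.le he.le) hBwpos.le,
            mul_le_mul_of_nonneg_left hP1
              (mul_nonneg (mul_nonneg (by norm_num : (0:ℝ) ≤ 2) (mul_nonneg hEzpos.le he.le)) hBwpos.le)]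
    -- end of bound
  -- integrability of G z
  have hGint : Integrable (G z) := by
    refine integrable_of_poly_gauss_bound (hcontG z)
      (Real.exp (2*‖z‖^2) * Cw + Real.exp (2*‖w‖^2) * Cz) ?_
    intro u
    calc ‖G z u‖ ≤ ‖Complex.exp (-2 * (z - (u:ℂ)) ^ 2) * cerfc ((Real.sqrt 2 : ℂ) * (w - (u:ℂ)))‖
        + ‖Complex.exp (-2 * (w - (u:ℂ)) ^ 2) * cerfc ((Real.sqrt 2 : ℂ) * (z - (u:ℂ)))‖ :=
          norm_sub_le _ _
      _ ≤ (Real.exp (2*‖z‖^2) * Cw) * ((1+|u|)^2 * Real.exp (-u^2))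
          + (Real.exp (2*‖w‖^2) * Cz) * ((1+|u|)^2 * Real.exp (-u^2)) := by
          apply add_le_add
          · exact norm_exp_mul_cerfc_le z w u ‖z‖ le_rfl
          · exact norm_exp_mul_cerfc_le w z u ‖w‖ le_rfl
      _ = (Real.exp (2*‖z‖^2) * Cw + Real.exp (2*‖w‖^2) * Cz) * ((1+|u|)^2 * Real.exp (-u^2)) := by
          ring
  -- global integrability of G' z
  have hG'int : Integrable (G' z) :=
    integrable_of_poly_gauss_bound (hcontG' z) K (fun u => hboundG' u z (by linarith))
  -- dominated differentiation
  have key := hasDerivAt_integral_of_dominated_loc_of_deriv_le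
    (F := G) (F' := G') (x₀ := z) (μ := μ)
    (bound := fun u => K * ((1+|u|)^2 * Real.exp (-u^2)))
    (Metric.ball_mem_nhds z one_pos)
    (Eventually.of_forall fun x => (hcontG x).aestronglyMeasurable)
    hGint.restrict
    ((hcontG' z).aestronglyMeasurable)
    (Eventually.of_forall fun u x hx => by
      refine hboundG' u x ?_
      have h1 : ‖x - z‖ < 1 := mem_ball_iff_norm.1 hx
      have h2 : ‖x‖ - ‖z‖ ≤ ‖x - z‖ := norm_sub_norm_le x z
      linarith)
    ((integrable_poly_gauss.const_mul K).restrict)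
    (Eventually.of_forall fun u x _ => hdiff u x)
  -- compute the integral of G' z
  have hval : (∫ u, G' z u ∂μ)
      = ((Real.sqrt 2 : ℂ)) * (Complex.exp (-(z-w)^2) * cerfc (z+w))
        - Complex.exp (-2*z^2) * cerfc ((Real.sqrt 2 : ℂ)*w) := by
    set P : ℝ → ℂ := fun u =>
      Complex.exp (-2*(z-(u:ℂ))^2) * cerfc ((Real.sqrt 2 : ℂ)*(w-(u:ℂ))) with hPdef
    set Pd : ℝ → ℂ := fun u =>
      -(4*(z-(u:ℂ)) * Complex.exp (-2*(z-(u:ℂ))^2) * cerfc ((Real.sqrt 2 : ℂ)*(w-(u:ℂ)))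
        + (2*(Real.sqrt 2 : ℂ)/(Real.sqrt Real.pi : ℂ))
            * (Complex.exp (-2*(z-(u:ℂ))^2) * Complex.exp (-2*(w-(u:ℂ))^2))) with hPddef
    have hPder : ∀ u : ℝ, HasDerivAt (fun v : ℝ => -(P v)) (Pd u) u := by
      intro u
      have hg1 : HasDerivAt (fun y : ℂ => -2*(z-y)^2)
          (-2 * (2 * (z - (u:ℂ))^1 * -1)) (u:ℂ) :=
        (((hasDerivAt_id ((u:ℂ))).const_sub z).pow 2).const_mul (-2:ℂ)
      have h1 := hg1.cexp
      have hinner2 : HasDerivAt (fun y : ℂ => (Real.sqrt 2 : ℂ)*(w-y))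
          ((Real.sqrt 2 : ℂ) * (-1)) (u:ℂ) :=
        ((hasDerivAt_id ((u:ℂ))).const_sub w).const_mul ((Real.sqrt 2 : ℂ))
      have h2 := (hasDerivAt_cerfc ((Real.sqrt 2 : ℂ)*(w-(u:ℂ)))).comp ((u:ℂ)) hinner2
      have h3 := ((h1.mul h2).neg).comp_ofReal
      refine h3.congr_deriv ?_
      have hexpw : Complex.exp (-((Real.sqrt 2 : ℂ)*(w-(u:ℂ)))^2)
          = Complex.exp (-2*(w-(u:ℂ))^2) := by
        rw [mul_pow, s2_sq]
        congr 1
        ring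
      rw [hPddef]
      simp only [Function.comp]
      rw [hexpw]
      ring
    have hsplit : ∀ u : ℝ, G' z u = Pd u
        + ((4*(Real.sqrt 2 : ℂ)/(Real.sqrt Real.pi : ℂ)) * Complex.exp (-(z-w)^2))
            * Complex.exp (-((z+w) - 2*(u:ℂ))^2) := by
      intro u
      have hexp2 : Complex.exp (-(z-w)^2) * Complex.exp (-((z+w) - 2*(u:ℂ))^2)
          = Complex.exp (-2*(z-(u:ℂ))^2) * Complex.exp (-2*(w-(u:ℂ))^2) := by
        rw [← Complex.exp_add, ← Complex.exp_add]
        congr 1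
        ring
      rw [hG', hPddef]
      have : ((4*(Real.sqrt 2 : ℂ)/(Real.sqrt Real.pi : ℂ)) * Complex.exp (-(z-w)^2))
            * Complex.exp (-((z+w) - 2*(u:ℂ))^2)
          = (4*(Real.sqrt 2 : ℂ)/(Real.sqrt Real.pi : ℂ))
            * (Complex.exp (-2*(z-(u:ℂ))^2) * Complex.exp (-2*(w-(u:ℂ))^2)) := by
        rw [mul_assoc, hexp2]
      rw [this]
      ring
    have hQcont : Continuous (fun u : ℝ => Complex.exp (-((z+w) - 2*(u:ℂ))^2)) := by fun_prop
    have hQint : Integrable (fun u : ℝ => Complex.exp (-((z+w) - 2*(u:ℂ))^2)) :=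
      integrable_of_poly_gauss_bound hQcont (Real.exp (2*‖z+w‖^2))
        (fun u => norm_cexp_neg_sq_shift_le (z+w) u ‖z+w‖ le_rfl)
    have hQint2 : Integrable (fun u : ℝ =>
        ((4*(Real.sqrt 2 : ℂ)/(Real.sqrt Real.pi : ℂ)) * Complex.exp (-(z-w)^2))
          * Complex.exp (-((z+w) - 2*(u:ℂ))^2)) := hQint.const_mul _
    have hPdint : Integrable Pd := by
      refine (hG'int.sub hQint2).congr (Eventually.of_forall fun u => ?_)
      simp only [Pi.sub_apply]
      rw [hsplit u]
      ring
    have hPtend : Tendsto (fun u : ℝ => -(P u)) atBot (𝓝 (0:ℂ)) := by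
      have hb : ∀ u : ℝ, ‖-(P u)‖ ≤ (Real.exp (2*‖z‖^2) * (1+4*(‖w‖+1)*Real.exp (2*w.im^2)))
          * ((1+|u|)^2 * Real.exp (-u^2)) := by
        intro u
        rw [norm_neg]
        exact norm_exp_mul_cerfc_le z w u ‖z‖ le_rfl
      have htz := tendsto_poly_gauss_atBot.const_mul
        (Real.exp (2*‖z‖^2) * (1+4*(‖w‖+1)*Real.exp (2*w.im^2)))
      rw [mul_zero] at htz
      exact squeeze_zero_norm hb htz
    have hFTC : ∫ u in Set.Iic (0:ℝ), Pd u = -(P 0) - 0 :=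
      MeasureTheory.integral_Iic_of_hasDerivAt_of_tendsto'
        (fun x _ => hPder x) hPdint.integrableOn hPtend
    have hP0 : P 0 = Complex.exp (-2*z^2) * cerfc ((Real.sqrt 2 : ℂ)*w) := by
      rw [hPdef]
      norm_num
    calc (∫ u, G' z u ∂μ)
        = ∫ u in Set.Iio (0:ℝ), (Pd u
            + ((4*(Real.sqrt 2 : ℂ)/(Real.sqrt Real.pi : ℂ)) * Complex.exp (-(z-w)^2))
              * Complex.exp (-((z+w) - 2*(u:ℂ))^2)) := by
          rw [hμ]
          exact MeasureTheory.integral_congr_ae (Eventually.of_forall fun u => hsplit u)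
      _ = (∫ u in Set.Iio (0:ℝ), Pd u)
            + ∫ u in Set.Iio (0:ℝ), ((4*(Real.sqrt 2 : ℂ)/(Real.sqrt Real.pi : ℂ))
                * Complex.exp (-(z-w)^2)) * Complex.exp (-((z+w) - 2*(u:ℂ))^2) :=
          MeasureTheory.integral_add hPdint.restrict hQint2.restrict
      _ = (-(P 0) - 0)
            + ((4*(Real.sqrt 2 : ℂ)/(Real.sqrt Real.pi : ℂ)) * Complex.exp (-(z-w)^2))
              * (((Real.sqrt Real.pi / 4 : ℝ):ℂ) * cerfc (z+w)) := by
          rw [← hFTC, MeasureTheory.integral_const_mul, integral_halfline_gaussian (z+w)]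
          congr 1
          exact MeasureTheory.setIntegral_congr_set Iio_ae_eq_Iic
      _ = ((Real.sqrt 2 : ℂ)) * (Complex.exp (-(z-w)^2) * cerfc (z+w))
            - Complex.exp (-2*z^2) * cerfc ((Real.sqrt 2 : ℂ)*w) := by
          rw [hP0]
          push_cast
          field_simp [spi_ne]
          ring
  rw [hval] at key
  have final := key.2.const_mul ((1/(Real.sqrt 2 : ℂ)))
  have hfun : (fun x => (1/(Real.sqrt 2 : ℂ)) * ∫ u, G x u ∂μ) = (fun x => fEdge x w) := by
    funext x
    rw [fEdge]
  rw [hfun] at final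
  refine final.congr_deriv ?_
  field_simp [s2_ne]
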